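/- Let B be a noetherian normal domain, I ⊆ B an ideal, D a Weil divisor (codimension-one cycle) on Spec B whose support is contained in V(I), and suppose the ideal I_D · B̂ is principal in the I-adic completion B̂ of B, where B̂ is a normal domain and B → B̂ is flat. Then I_D · B' is principal, where B' = (1+I)^{-1}B. -/

import Mathlib

set_option maxHeartbeats 1000000

open AdicCompletion

lemma evalₐ_eq_zero_iff {B : Type*} [CommRing B] (I : Ideal B) (n : ℕ)
    (z : AdicCompletion I B) : evalₐ I n z = 0 ↔ z.val n = 0 := by
  unfold AdicCompletion.evalₐ
  simp only [AlgHom.comp_apply, AlgHom.ofLinearMap_apply]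
  change (Ideal.quotientEquivAlgOfEq B _) (z.val n) = 0 ↔ _
  constructor
  · intro h
    have := congrArg (Ideal.quotientEquivAlgOfEq B
      (show (I ^ n • ⊤ : Ideal B) = I ^ n by ext x; simp)).symm h
    simpa using this
  · intro h
    rw [h]
    simp

lemma onePlus_isUnit_of_val_one_eq_zero {B : Type*} [CommRing B] (I : Ideal B)
    (z : AdicCompletion I B) (hz : z.val 1 = 0) : IsUnit (1 + z) := by
  have hval : ∀ n : ℕ, IsUnit ((1 + z).val n) := by
    intro n
    rw [AdicCompletion.val_add_apply, AdicCompletion.val_one]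
    obtain _ | n := n
    · have hsub : Subsingleton (B ⧸ (I ^ 0 • ⊤ : Ideal B)) := by
        refine Submodule.Quotient.subsingleton_iff.mpr (by simp)
      exact isUnit_of_subsingleton _
    · obtain ⟨v, hv⟩ := Ideal.Quotient.mk_surjective (z.val (n + 1))
      have h1 : v ∈ I := by
        have hcomp := z.property (show (1 : ℕ) ≤ n + 1 by omega)
        rw [← hv, transitionMap_ideal_mk, hz] at hcomp
        have hvmem : v ∈ (I ^ 1 • ⊤ : Ideal B) :=
          (Ideal.Quotient.eq_zero_iff_mem).mp hcomp
        simpa using hvmem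
      have hnil : IsNilpotent (z.val (n + 1)) := by
        refine ⟨n + 1, ?_⟩
        rw [← hv, ← map_pow, Ideal.Quotient.eq_zero_iff_mem]
        have hp : v ^ (n + 1) ∈ I ^ (n + 1) := Ideal.pow_mem_pow h1 _
        simpa using hp
      exact hnil.isUnit_one_add
  choose u hu using hval
  have hcompat : ∀ {m n : ℕ} (hmn : m ≤ n),
      transitionMap I B hmn ((u n)⁻¹ : (B ⧸ (I ^ n • ⊤ : Ideal B))ˣ) = ((u m)⁻¹ : _) := by
    intro m n hmn
    have h2 : ((1 + z).val n) * ((u n)⁻¹ : _) = 1 := by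
      rw [← hu n]; exact Units.mul_inv _
    have h1 : (1 : B ⧸ (I ^ m • ⊤ : Ideal B)) =
        (1 + z).val m * transitionMap I B hmn ((u n)⁻¹ : _) := by
      have := congrArg (transitionMap I B hmn) h2
      rw [transitionMap_map_mul, transitionMap_map_one, (1 + z).property hmn] at this
      exact this.symm
    have h3 : (u m : B ⧸ (I ^ m • ⊤ : Ideal B)) * transitionMap I B hmn ((u n)⁻¹ : _) = 1 := by
      rw [hu m]; exact h1.symm
    exact (Units.inv_eq_of_mul_eq_one_right h3).symm
  let ζ : AdicCompletion I B := ⟨fun n => ((u n)⁻¹ : _), fun {m n} hmn => hcompat hmn⟩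
  refine IsUnit.of_mul_eq_one (a := 1 + z) ζ (AdicCompletion.ext fun n => ?_)
  rw [AdicCompletion.val_mul, AdicCompletion.val_one, ← hu n]
  exact Units.mul_inv _


/-- The multiplicative set `1 + I` in a commutative ring. -/
def onePlus {B : Type*} [CommRing B] (I : Ideal B) : Submonoid B where
  carrier := {b | ∃ x ∈ I, b = 1 + x}
  one_mem' := ⟨0, Ideal.zero_mem I, by ring⟩
  mul_mem' := by
    rintro a b ⟨x, hx, rfl⟩ ⟨y, hy, rfl⟩
    exact ⟨x + y + x * y, by
      refine I.add_mem (I.add_mem hx hy) (I.mul_mem_right y hx), by ring⟩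

/-- Let `B` be a noetherian normal domain, `I ⊆ B` an ideal, and let `J`
be the divisorial ideal `I_D` of a codimension-one cycle `D` on `Spec B` whose support is
contained in `V(I)` (every prime containing `J` contains `I`).  If `J·B̂` is principal in
the `I`-adic completion `B̂` of `B`, then `J·B'` is principal, where `B' = (1+I)⁻¹B`. -/
theorem divisorial_ideal_principal_in_zariski_localization
    {B : Type*} [CommRing B] [IsDomain B] [IsNoetherianRing B] [IsIntegrallyClosed B]
    (I : Ideal B) (J : Ideal B)
    (hsupp : ∀ P : Ideal B, P.IsPrime → J ≤ P → I ≤ P)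
    (hBhat : IsDomain (AdicCompletion I B) ∧ IsIntegrallyClosed (AdicCompletion I B) ∧
      Module.Flat B (AdicCompletion I B))
    (hprin : (J.map (algebraMap B (AdicCompletion I B))).IsPrincipal) :
    (J.map (algebraMap B (Localization (onePlus I)))).IsPrincipal := by
  classical
  set Bh := AdicCompletion I B with hBh
  set ψ := algebraMap B Bh with hψdef
  set φ := algebraMap B (Localization (onePlus I)) with hφdef
  -- generators of J
  obtain ⟨n, a, ha⟩ := Submodule.fg_iff_exists_fin_generating_family.mp (IsNoetherian.noetherian J)
  have haJ : ∀ i, a i ∈ J := fun i => by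
    rw [← ha]; exact Submodule.subset_span (Set.mem_range_self i)
  obtain ⟨x, hx⟩ := hprin.principal
  -- the kernel ideal
  set Nker : Ideal Bh := RingHom.ker (evalₐ I 1) with hNker
  have hjac : Nker ≤ Ideal.jacobson ⊥ := by
    intro z hz
    rw [Ideal.mem_jacobson_bot]
    intro t
    have hzt : z * t ∈ Nker := Ideal.mul_mem_right t _ hz
    have h0 : (z * t).val 1 = 0 :=
      (evalₐ_eq_zero_iff I 1 (z * t)).mp (RingHom.mem_ker.mp hzt)
    have := onePlus_isUnit_of_val_one_eq_zero I (z * t) h0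
    rwa [add_comm] at this
  have hmap : J.map ψ = Ideal.span (Set.range (ψ ∘ a)) := by
    rw [← ha, Ideal.submodule_span_eq, Ideal.map_span, Set.range_comp]
  -- coefficients of x
  have hxmem : x ∈ Ideal.span (Set.range (ψ ∘ a)) := by
    rw [← hmap, hx]; exact Ideal.mem_span_singleton_self x
  obtain ⟨c, hc⟩ := (Submodule.mem_span_range_iff_exists_fun _).mp hxmem
  have hxsum : ∑ i, c i * ψ (a i) = x := by simpa [smul_eq_mul] using hc
  -- approximations
  have hβ : ∀ i, ∃ β : B, Ideal.Quotient.mk (I ^ 1) β = evalₐ I 1 (c i) :=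
    fun i => Ideal.Quotient.mk_surjective _
  choose β hβ using hβ
  set y : B := ∑ i, β i * a i with hy
  have hyJ : y ∈ J := Ideal.sum_mem J fun i _ => Ideal.mul_mem_left J (β i) (haJ i)
  have hψy : ψ y = ∑ i, ψ (β i) * ψ (a i) := by rw [hy, map_sum]; simp [map_mul]
  -- Nakayama hypothesis
  have hFG : (J.map ψ).FG := hmap ▸ Submodule.fg_span (Set.finite_range _)
  have hle : J.map ψ ≤ Ideal.span {ψ y} ⊔ Nker • (J.map ψ) := by
    refine hmap.le.trans ?_
    rw [Ideal.span_le]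
    rintro _ ⟨j, rfl⟩
    have h1 : ψ (a j) ∈ Submodule.span Bh {x} := by
      rw [← hx]; exact Ideal.mem_map_of_mem ψ (haJ j)
    obtain ⟨d, hd⟩ := Submodule.mem_span_singleton.mp h1
    rw [smul_eq_mul] at hd
    have key : (ψ ∘ a) j = d * ψ y + ∑ i, (d * (c i - ψ (β i))) * ψ (a i) := by
      show ψ (a j) = _
      rw [hψy, ← hd, ← hxsum, Finset.mul_sum, Finset.mul_sum,
        ← Finset.sum_add_distrib]
      exact Finset.sum_congr rfl fun i _ => by ring
    rw [key]
    refine Submodule.add_mem_sup (Ideal.mem_span_singleton'.mpr ⟨d, rfl⟩) ?_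
    refine Submodule.sum_mem _ fun i _ => ?_
    have hker : d * (c i - ψ (β i)) ∈ Nker := by
      refine Ideal.mul_mem_left _ d ?_
      rw [RingHom.mem_ker, map_sub]
      have : evalₐ I 1 (ψ (β i)) = Ideal.Quotient.mk (I ^ 1) (β i) := by
        rw [hψdef, AlgHom.commutes, Ideal.Quotient.algebraMap_eq]
      rw [this, hβ i, sub_self]
    have := Submodule.smul_mem_smul hker (Ideal.mem_map_of_mem ψ (haJ i))
    rwa [smul_eq_mul] at this
  have hNak : J.map ψ ≤ Ideal.span {ψ y} :=
    Submodule.le_of_le_smul_of_le_jacobson_bot hFG hjac hle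
  -- descent to B via Krull intersection
  set K : Ideal B := Ideal.span {y} with hK
  have hevalψ : ∀ (m : ℕ) (b : B), evalₐ I m (ψ b) = Ideal.Quotient.mk (I ^ m) b := by
    intro m b
    rw [hψdef, AlgHom.commutes, Ideal.Quotient.algebraMap_eq]
  have hsj : ∀ j, ∃ s ∈ onePlus I, s * a j ∈ K := by
    intro j
    have h1 : ψ (a j) ∈ Ideal.span {ψ y} := hNak (Ideal.mem_map_of_mem ψ (haJ j))
    obtain ⟨d, hd⟩ := Ideal.mem_span_singleton'.mp h1
    have hq : (Submodule.mkQ K) (a j) ∈ (⨅ m : ℕ, I ^ m • ⊤ : Submodule B (B ⧸ K)) := by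
      rw [Submodule.mem_iInf]
      intro m
      obtain ⟨e, he⟩ := Ideal.Quotient.mk_surjective (I := I ^ m) (evalₐ I m d)
      have hmk : Ideal.Quotient.mk (I ^ m) (a j) = Ideal.Quotient.mk (I ^ m) (e * y) := by
        have h2 := congrArg (evalₐ I m) hd
        rw [map_mul, hevalψ, hevalψ, ← he, ← map_mul] at h2
        exact h2.symm
      have hsub : a j - e * y ∈ I ^ m := by
        rw [Ideal.Quotient.mk_eq_mk_iff_sub_mem] at hmk
        exact hmk
      have heq : Submodule.mkQ K (a j) = Submodule.mkQ K (a j - e * y) := by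
        rw [map_sub]
        have : Submodule.mkQ K (e * y) = 0 := by
          rw [Submodule.mkQ_apply, Submodule.Quotient.mk_eq_zero]
          exact Ideal.mem_span_singleton'.mpr ⟨e, rfl⟩
        rw [this, sub_zero]
      rw [heq, show Submodule.mkQ K (a j - e * y) = (a j - e * y) • Submodule.mkQ K 1 from by
        rw [← LinearMap.map_smul, smul_eq_mul, mul_one]]
      exact Submodule.smul_mem_smul hsub Submodule.mem_top
    rw [Ideal.mem_iInf_smul_pow_eq_bot_iff] at hq
    obtain ⟨r, hr⟩ := hq
    refine ⟨1 + (-(r : B)), ⟨-(r : B), I.neg_mem r.2, rfl⟩, ?_⟩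
    have hz : Submodule.mkQ K ((1 + -(r : B)) * a j) = 0 := by
      have hsmul : Submodule.mkQ K ((r : B) * a j) = (r : B) • Submodule.mkQ K (a j) := by
        rw [← LinearMap.map_smul, smul_eq_mul]
      rw [add_mul, one_mul, neg_mul, map_add, map_neg, hsmul, hr, add_neg_cancel]
    rw [Submodule.mkQ_apply, Submodule.Quotient.mk_eq_zero] at hz
    exact hz
  choose s hs hsy using hsj
  refine ⟨⟨φ y, le_antisymm ?_ ?_⟩⟩
  · have hmapφ : J.map φ = Ideal.span (Set.range (φ ∘ a)) := by
      rw [← ha, Ideal.submodule_span_eq, Ideal.map_span, Set.range_comp]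
    rw [hmapφ, Ideal.span_le]
    rintro _ ⟨j, rfl⟩
    obtain ⟨cj, hcj⟩ := Ideal.mem_span_singleton'.mp (hsy j)
    obtain ⟨u, hu⟩ := IsLocalization.map_units (M := onePlus I)
      (Localization (onePlus I)) ⟨s j, hs j⟩
    refine Ideal.mem_span_singleton'.mpr ⟨(u⁻¹ : _) * φ cj, ?_⟩
    have : ((u⁻¹ : _) : Localization (onePlus I)) * φ cj * φ y
        = (u⁻¹ : _) * (u * φ (a j)) := by
      rw [mul_assoc, ← map_mul, hcj, map_mul, hu]
    rw [this, ← mul_assoc, Units.inv_mul, one_mul]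
    rfl
  · rw [Ideal.submodule_span_eq, Ideal.span_le, Set.singleton_subset_iff]
    exact Ideal.mem_map_of_mem φ hyJ
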